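/- Let k be a commutative ring, n ≥ 1, F the free group on n generators t_1, …, t_n, and Λ = MonoidAlgebra k F its group algebra. Let ε : Λ → k be the augmentation (the k-algebra homomorphism sending every group element of F to 1) and let I be the kernel of ε, regarded as a k-submodule of Λ (it is a two-sided ideal, the augmentation ideal). Then the intersection of all powers of I is zero: ⨅ (m : ℕ), I^(m+1) = ⊥, where powers are taken under submodule multiplication in the k-algebra Λ. Consequently the I-adic ideal topology on Λ is Hausdorff. -/

import Mathlib

noncomputable def freeGroupAug (k : Type*) [CommRing k] (n : ℕ) :
    MonoidAlgebra k (FreeGroup (Fin n)) →ₐ[k] k :=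
  MonoidAlgebra.lift k k (FreeGroup (Fin n)) 1

namespace FoxAux

variable {k : Type*} [CommRing k] {n : ℕ}

abbrev Lam (k : Type*) [CommRing k] (n : ℕ) := MonoidAlgebra k (FreeGroup (Fin n))

/-- Group carrying Fox derivative data. -/
@[ext] structure FoxG (k : Type*) [CommRing k] (n : ℕ) where
  g : FreeGroup (Fin n)
  v : Fin n → Lam k n

namespace FoxG

noncomputable abbrev ofF (u : FreeGroup (Fin n)) : Lam k n := MonoidAlgebra.of k (FreeGroup (Fin n)) u

noncomputable instance : Mul (FoxG k n) :=
  ⟨fun a b => ⟨a.g * b.g, fun i => a.v i + ofF a.g * b.v i⟩⟩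

noncomputable instance : One (FoxG k n) := ⟨⟨1, 0⟩⟩

noncomputable instance : Inv (FoxG k n) :=
  ⟨fun a => ⟨a.g⁻¹, fun i => -(ofF a.g⁻¹ * a.v i)⟩⟩

@[simp] lemma mul_g (a b : FoxG k n) : (a * b).g = a.g * b.g := rfl
@[simp] lemma mul_v (a b : FoxG k n) (i : Fin n) : (a * b).v i = a.v i + ofF a.g * b.v i := rfl
@[simp] lemma one_g : (1 : FoxG k n).g = 1 := rfl
@[simp] lemma one_v (i : Fin n) : (1 : FoxG k n).v i = 0 := rfl
@[simp] lemma inv_g (a : FoxG k n) : (a⁻¹).g = a.g⁻¹ := rfl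
@[simp] lemma inv_v (a : FoxG k n) (i : Fin n) : (a⁻¹).v i = -(ofF a.g⁻¹ * a.v i) := rfl

@[simp] lemma ofF_one : (ofF 1 : Lam k n) = 1 := map_one (MonoidAlgebra.of k (FreeGroup (Fin n)))
@[simp] lemma ofF_mul (u w : FreeGroup (Fin n)) : (ofF (u * w) : Lam k n) = ofF u * ofF w :=
  map_mul (MonoidAlgebra.of k (FreeGroup (Fin n))) u w

lemma ofF_inv_mul (u : FreeGroup (Fin n)) : (ofF u⁻¹ : Lam k n) * ofF u = 1 := by
  rw [← ofF_mul, inv_mul_cancel, ofF_one]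

lemma ofF_mul_inv (u : FreeGroup (Fin n)) : (ofF u : Lam k n) * ofF u⁻¹ = 1 := by
  rw [← ofF_mul, mul_inv_cancel, ofF_one]

noncomputable instance : Group (FoxG k n) :=
  Group.ofLeftAxioms
    (fun a b c =>
      FoxG.ext (mul_assoc _ _ _) (funext fun i => by
        show (a.v i + ofF a.g * b.v i) + ofF (a.g * b.g) * c.v i
            = a.v i + (ofF a.g * (b.v i + ofF b.g * c.v i))
        rw [ofF_mul, mul_add, mul_assoc, add_assoc]))
    (fun a =>
      FoxG.ext (one_mul _) (funext fun i => by
        show (0 : Lam k n) + ofF 1 * a.v i = a.v i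
        rw [ofF_one, one_mul, zero_add]))
    (fun a =>
      FoxG.ext (inv_mul_cancel _) (funext fun i => by
        show -(ofF a.g⁻¹ * a.v i) + ofF a.g⁻¹ * a.v i = 0
        rw [neg_add_cancel]))

end FoxG

open FoxG in
/-- letter images used for the Fox derivative of family `b`. -/
noncomputable def foxVal (b : Bool) (j : Fin n) : Lam k n :=
  cond b 1 (-(ofF (FreeGroup.of j)))

/-- The Fox homomorphism. -/
noncomputable def foxHom (b : Bool) : FreeGroup (Fin n) →* FoxG k n :=
  FreeGroup.lift fun j => ⟨FreeGroup.of j, Pi.single j (foxVal b j)⟩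

/-- projection -/
def gHom : FoxG k n →* FreeGroup (Fin n) where
  toFun := FoxG.g
  map_one' := rfl
  map_mul' _ _ := rfl

@[simp] lemma foxHom_g (b : Bool) (w : FreeGroup (Fin n)) : (foxHom (k := k) b w).g = w := by
  have : (gHom (k := k) (n := n)).comp (foxHom b) = MonoidHom.id _ := by
    apply FreeGroup.ext_hom
    intro a
    simp [foxHom, gHom]
  exact DFunLike.congr_fun this w

/-- The Fox derivatives of a group element. -/
noncomputable def d (b : Bool) (w : FreeGroup (Fin n)) : Fin n → Lam k n :=
  (foxHom (k := k) b w).v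

@[simp] lemma d_one (b : Bool) : d (k := k) (n := n) b 1 = 0 :=
  congrArg FoxG.v (map_one (foxHom b))

lemma d_mul (b : Bool) (u w : FreeGroup (Fin n)) (i : Fin n) :
    d (k := k) b (u * w) i = d b u i + FoxG.ofF u * d b w i := by
  have h := congrArg FoxG.v (map_mul (foxHom (k := k) b) u w)
  have := congrFun h i
  simpa [d, FoxG.mul_v] using this

@[simp] lemma d_of (b : Bool) (j : Fin n) :
    d (k := k) b (FreeGroup.of j) = Pi.single j (foxVal b j) := by
  unfold d foxHom
  rw [FreeGroup.lift_apply_of]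

lemma d_inv (b : Bool) (w : FreeGroup (Fin n)) (i : Fin n) :
    d (k := k) b w⁻¹ i = -(FoxG.ofF w⁻¹ * d b w i) := by
  have h := congrArg FoxG.v (map_inv (foxHom (k := k) b) w)
  have := congrFun h i
  simpa [d, FoxG.inv_v] using this

/-- The family-`b` basis elements of the free group. -/
def Yb (b : Bool) (i : Fin n) : FreeGroup (Fin n) :=
  cond b (FreeGroup.of i) (FreeGroup.of i)⁻¹

open FoxG in
/-- Reconstruction of a group element from its Fox derivatives. -/
lemma recon_of (b : Bool) (w : FreeGroup (Fin n)) :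
    (ofF w : Lam k n) = 1 + ∑ i, d b w i * (ofF (Yb b i) - 1) := by
  induction w using FreeGroup.induction_on with
  | C1 => simp [MonoidAlgebra.one_def]
  | of j =>
      show (ofF (FreeGroup.of j) : Lam k n)
          = 1 + ∑ i, d b (FreeGroup.of j) i * (ofF (Yb b i) - 1)
      rw [Fintype.sum_eq_single j (fun m hm => by
        rw [d_of, Pi.single_eq_of_ne hm, zero_mul])]
      rw [d_of, Pi.single_eq_same]
      cases b with
      | true =>
          show (ofF (FreeGroup.of j) : Lam k n) = 1 + 1 * (ofF (FreeGroup.of j) - 1)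
          rw [one_mul]; abel
      | false =>
          show (ofF (FreeGroup.of j) : Lam k n)
              = 1 + -(ofF (FreeGroup.of j)) * (ofF (FreeGroup.of j)⁻¹ - 1)
          rw [neg_mul, mul_sub, mul_one, ofF_mul_inv, neg_sub]; abel
  | inv_of j _ =>
      show (ofF (FreeGroup.of j)⁻¹ : Lam k n)
          = 1 + ∑ i, d b (FreeGroup.of j)⁻¹ i * (ofF (Yb b i) - 1)
      rw [Fintype.sum_eq_single j (fun m hm => by
        rw [d_inv, d_of, Pi.single_eq_of_ne hm, mul_zero, neg_zero, zero_mul])]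
      rw [d_inv, d_of, Pi.single_eq_same]
      cases b with
      | true =>
          show (ofF (FreeGroup.of j)⁻¹ : Lam k n)
              = 1 + -(ofF (FreeGroup.of j)⁻¹ * 1) * (ofF (FreeGroup.of j) - 1)
          rw [mul_one, neg_mul, mul_sub, mul_one, ofF_inv_mul, neg_sub]; abel
      | false =>
          show (ofF (FreeGroup.of j)⁻¹ : Lam k n)
              = 1 + -(ofF (FreeGroup.of j)⁻¹ * -(ofF (FreeGroup.of j)))
                * (ofF (FreeGroup.of j)⁻¹ - 1)
          rw [mul_neg, neg_neg, ofF_inv_mul, one_mul]; abel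
  | mul u w ihu ihw =>
      have step : ∀ i : Fin n, d (k := k) b (u * w) i * (ofF (Yb b i) - 1)
          = d b u i * (ofF (Yb b i) - 1) + ofF u * (d b w i * (ofF (Yb b i) - 1)) :=
        fun i => by rw [d_mul, add_mul, mul_assoc]
      rw [Finset.sum_congr rfl fun i _ => step i, Finset.sum_add_distrib, ← Finset.mul_sum]
      rw [ofF_mul, ihu, ihw]
      noncomm_ring

open FoxG

/-- Linear extension of the Fox derivative. -/
noncomputable def pd (b : Bool) (i : Fin n) : Lam k n →ₗ[k] Lam k n :=
  Finsupp.linearCombination k (fun w => d b w i) ∘ₗ (MonoidAlgebra.coeffLinearEquiv k).toLinearMap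

@[simp] lemma pd_single (b : Bool) (i : Fin n) (w : FreeGroup (Fin n)) (c : k) :
    pd b i (MonoidAlgebra.single w c) = c • d b w i := by
  simp [pd, Finsupp.linearCombination_single]

@[simp] lemma pd_of (b : Bool) (i : Fin n) (w : FreeGroup (Fin n)) :
    pd b i (ofF (k := k) w) = d b w i := by
  rw [show ofF (k := k) w = MonoidAlgebra.single w 1 from MonoidAlgebra.of_apply k _ w,
    pd_single, one_smul]

@[simp] lemma aug_single (w : FreeGroup (Fin n)) (c : k) :
    freeGroupAug k n (MonoidAlgebra.single w c) = c := by
  rw [freeGroupAug, MonoidAlgebra.lift_single]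
  simp

@[simp] lemma aug_of (w : FreeGroup (Fin n)) :
    freeGroupAug k n (ofF w) = 1 :=
  aug_single w 1

/-- Product rule for the Fox derivative. -/
lemma pd_mul (b : Bool) (i : Fin n) (x y : Lam k n) :
    pd b i (x * y) = freeGroupAug k n y • pd b i x + x * pd b i y := by
  induction x using MonoidAlgebra.induction_on with
  | of u =>
      induction y using MonoidAlgebra.induction_on with
      | of w =>
          rw [← ofF_mul, pd_of, pd_of, pd_of, aug_of, one_smul, d_mul]
      | add f g hf hg =>
          rw [mul_add, map_add, hf, hg, map_add, map_add, mul_add]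
          rw [add_smul]
          abel
      | smul r f hf =>
          rw [mul_smul_comm, map_smul, hf, map_smul, map_smul, smul_add, smul_smul, smul_eq_mul, mul_smul_comm]
  | add f g hf hg =>
      rw [add_mul, map_add, hf, hg, map_add, add_mul, smul_add]
      abel
  | smul r f hf =>
      rw [smul_mul_assoc, map_smul, hf, map_smul, smul_add, smul_comm r, smul_mul_assoc]

/-- Reconstruction of an element of the group algebra from its Fox derivatives. -/
lemma recon (b : Bool) (x : Lam k n) :
    x = freeGroupAug k n x • 1 + ∑ i, pd b i x * (ofF (Yb b i) - 1) := by
  induction x using MonoidAlgebra.induction_on with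
  | of w =>
      rw [aug_of, one_smul]
      rw [Finset.sum_congr rfl fun i _ => by rw [pd_of]]
      exact recon_of b w
  | add f g hf hg =>
      rw [map_add, add_smul]
      rw [Finset.sum_congr rfl fun i _ => by rw [map_add, add_mul]]
      rw [Finset.sum_add_distrib]
      conv_lhs => rw [hf, hg]
      abel
  | smul r f hf =>
      rw [map_smul, smul_assoc]
      rw [Finset.sum_congr rfl fun i _ => by rw [map_smul, smul_mul_assoc]]
      rw [← Finset.smul_sum, ← smul_add]
      conv_lhs => rw [hf]

section Lists

lemma reduce_dropLast {α : Type*} [DecidableEq α] {l : List (α × Bool)}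
    (h : FreeGroup.reduce l = l) : FreeGroup.reduce l.dropLast = l.dropLast := by
  rcases eq_or_ne l [] with rfl | hne
  · simp
  · have hred : FreeGroup.Red l.dropLast (FreeGroup.reduce l.dropLast) := FreeGroup.reduce.red
    have h2 : FreeGroup.Red l (FreeGroup.reduce l.dropLast ++ [l.getLast hne]) := by
      conv_lhs => rw [← List.dropLast_append_getLast hne]
      exact FreeGroup.Red.append_append hred Relation.ReflTransGen.refl
    have h3 : FreeGroup.reduce l = FreeGroup.reduce l.dropLast ++ [l.getLast hne] :=
      FreeGroup.reduce.min (by rwa [h])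
    have h4 : l.dropLast ++ [l.getLast hne] = FreeGroup.reduce l.dropLast ++ [l.getLast hne] := by
      rw [List.dropLast_append_getLast hne, ← h3, h]
    exact (List.append_left_injective _ h4).symm

lemma mk_singleton (a : Fin n) :
    (FreeGroup.mk [(a, true)] : FreeGroup (Fin n)) = FreeGroup.of a := rfl

lemma mk_singleton_inv (a : Fin n) :
    (FreeGroup.mk [(a, false)] : FreeGroup (Fin n)) = (FreeGroup.of a)⁻¹ := by
  rw [FreeGroup.of, FreeGroup.inv_mk]
  simp [FreeGroup.invRev]

lemma last_decomp (w : FreeGroup (Fin n)) (hw : w ≠ 1) :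
    ∃ (u : FreeGroup (Fin n)) (y : Fin n × Bool),
      w = u * FreeGroup.mk [y] ∧ u.norm + 1 = w.norm ∧ w.toWord.getLast? = some y := by
  have hnil : w.toWord ≠ [] := fun h => hw (FreeGroup.toWord_eq_nil_iff.mp h)
  refine ⟨FreeGroup.mk w.toWord.dropLast, w.toWord.getLast hnil, ?_, ?_, ?_⟩
  · conv_lhs => rw [← FreeGroup.mk_toWord (x := w),
      ← List.dropLast_append_getLast hnil, ← FreeGroup.mul_mk]
  · have ht : (FreeGroup.mk w.toWord.dropLast).toWord = w.toWord.dropLast := by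
      rw [FreeGroup.toWord_mk, reduce_dropLast (FreeGroup.reduce_toWord w)]
    have hpos : 0 < w.toWord.length := List.length_pos_iff.mpr hnil
    simp only [FreeGroup.norm, ht, List.length_dropLast]
    omega
  · exact (List.getLast?_eq_getLast hnil).symm ▸ rfl

end Lists

/-- support of an element of the group algebra -/
abbrev suppF (x : Lam k n) : Finset (FreeGroup (Fin n)) := x.coeff.support

lemma suppF_add (x y : Lam k n) : suppF (x + y) ⊆ suppF x ∪ suppF y := Finsupp.support_add

lemma suppF_neg (x : Lam k n) : suppF (-x) = suppF x := Finsupp.support_neg x.coeff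

lemma suppF_ofF (u : FreeGroup (Fin n)) : suppF (ofF (k := k) u) ⊆ {u} :=
  Finsupp.support_single_subset

@[simp] lemma suppF_zero : suppF (0 : Lam k n) = ∅ := Finsupp.support_zero

/-- The key structure lemma for Fox derivatives of a reduced word:
the derivative is supported on shorter words, except for a possible `-w` term
when the final letter of `w` matches. -/
lemma d_top (b : Bool) (i : Fin n) (w : FreeGroup (Fin n)) :
    ∃ ρ : Lam k n,
      d b w i = ρ + (if w.toWord.getLast? = some (i, !b) then -(ofF (k := k) w) else 0) ∧
      ∀ v ∈ suppF ρ, v.norm < w.norm := by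
  suffices H : ∀ (N : ℕ) (w : FreeGroup (Fin n)), w.norm ≤ N →
      ∃ ρ : Lam k n,
      d b w i = ρ + (if w.toWord.getLast? = some (i, !b) then -(ofF (k := k) w) else 0) ∧
      ∀ v ∈ suppF ρ, v.norm < w.norm by exact H w.norm w le_rfl
  intro N
  induction N with
  | zero =>
      intro w hw
      have hw1 : w = 1 := by
        rw [Nat.le_zero] at hw; exact FreeGroup.norm_eq_zero.mp hw
      subst hw1
      exact ⟨0, by simp [FreeGroup.toWord_one], by simp⟩
  | succ N IH =>
      intro w hw
      by_cases hw1 : w = 1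
      · subst hw1
        exact ⟨0, by simp [FreeGroup.toWord_one], by simp⟩
      obtain ⟨u, y, hdec, hnorm, hlast⟩ := last_decomp w hw1
      obtain ⟨a, yb⟩ := y
      obtain ⟨ρu, hu, hsu⟩ := IH u (by omega)
      have hdu : ∀ v ∈ suppF (d (k := k) b u i), v.norm ≤ u.norm := by
        intro v hv
        rw [hu] at hv
        rcases Finset.mem_union.mp (suppF_add _ _ hv) with h | h
        · exact le_of_lt (hsu v h)
        · by_cases hc : u.toWord.getLast? = some (i, !b)
          · rw [if_pos hc, suppF_neg] at h
            have := suppF_ofF (k := k) u h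
            rw [Finset.mem_singleton] at this
            exact this ▸ le_rfl
          · rw [if_neg hc] at h
            simp at h
      have hun : u.norm < w.norm := by omega
      have key : ofF (k := k) u * d b (FreeGroup.mk [(a, yb)]) i
          = (if i = a ∧ yb = b then ofF (k := k) u else 0)
            + (if ((a : Fin n), yb) = (i, !b) then -(ofF (k := k) w) else 0) := by
        by_cases hia : i = a
        · subst hia
          cases b <;> cases yb <;>
            simp only [mk_singleton, mk_singleton_inv, d_of, d_inv, foxVal,
              Pi.single_eq_same, Bool.cond_true, Bool.cond_false, Bool.not_true,
              Bool.not_false, mul_one, mul_neg, neg_neg, mul_zero]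
          · rw [ofF_inv_mul, mul_one]; simp
          · rw [hdec, mk_singleton, ofF_mul]; simp
          · rw [hdec, mk_singleton_inv, ofF_mul]; simp
          · simp
        · cases yb <;>
            simp [mk_singleton, mk_singleton_inv, d_of, d_inv,
              Pi.single_eq_of_ne hia, hia, Ne.symm hia]
      refine ⟨d b u i + (if i = a ∧ yb = b then ofF (k := k) u else 0), ?_, ?_⟩
      · conv_lhs => rw [hdec, d_mul]
        rw [key]
        simp only [hlast, Option.some.injEq]
        rw [add_assoc]
      · intro v hv
        rcases Finset.mem_union.mp (suppF_add _ _ hv) with h | h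
        · exact lt_of_le_of_lt (hdu v h) hun
        · by_cases hc : i = a ∧ yb = b
          · rw [if_pos hc] at h
            have := suppF_ofF (k := k) u h
            rw [Finset.mem_singleton] at this
            exact this ▸ hun
          · rw [if_neg hc] at h
            simp at h

lemma mem_suppF_iff {x : Lam k n} {w : FreeGroup (Fin n)} :
    w ∈ suppF x ↔ x.coeff w ≠ 0 := Finsupp.mem_support_iff

lemma pd_coeff (b : Bool) (i : Fin n) (x : Lam k n) (v : FreeGroup (Fin n)) :
    (pd b i x).coeff v = Finsupp.sum x.coeff fun w c => c * ((d b w i).coeff v) := by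
  rw [pd, LinearMap.comp_apply, LinearEquiv.coe_coe, MonoidAlgebra.coeffLinearEquiv_apply,
    Finsupp.linearCombination_apply, MonoidAlgebra.coeff_finsuppSum, Finsupp.sum_apply]
  refine Finsupp.sum_congr fun w _ => ?_
  rw [MonoidAlgebra.coeff_smul_apply, smul_eq_mul]

lemma d_coeff_high (b : Bool) (i : Fin n) {w v : FreeGroup (Fin n)} (hle : w.norm ≤ v.norm) :
    (d (k := k) b w i).coeff v
      = if w = v ∧ v.toWord.getLast? = some (i, !b) then -(1 : k) else 0 := by
  obtain ⟨ρ, he, hs⟩ := d_top (k := k) b i w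
  have hρ : ρ.coeff v = 0 :=
    Finsupp.notMem_support_iff.mp fun hmem => absurd (hs v hmem) (not_lt.mpr hle)
  rw [he, MonoidAlgebra.coeff_add, Finsupp.add_apply, hρ, zero_add]
  by_cases hc : w.toWord.getLast? = some (i, !b)
  · rw [if_pos hc, MonoidAlgebra.coeff_neg, Finsupp.neg_apply]
    by_cases hwv : w = v
    · rw [hwv] at hc ⊢
      rw [if_pos ⟨rfl, hc⟩]
      simp [FoxG.ofF, MonoidAlgebra.of_apply, Finsupp.single_apply]
    · rw [if_neg (fun hh : _ ∧ _ => hwv hh.1)]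
      simp [FoxG.ofF, MonoidAlgebra.of_apply, Finsupp.single_apply, hwv]
  · rw [if_neg hc, if_neg (fun hh : _ ∧ _ => hc (by rw [hh.1]; exact hh.2))]
    simp

lemma pd_coeff_high (b : Bool) (i : Fin n) {x : Lam k n} {L : ℕ}
    (hx : ∀ w ∈ suppF x, w.norm ≤ L) {v : FreeGroup (Fin n)} (hv : L ≤ v.norm) :
    (pd b i x).coeff v = if v.toWord.getLast? = some (i, !b) then -(x.coeff v) else 0 := by
  rw [pd_coeff, Finsupp.sum]
  have hterm : ∀ w ∈ suppF x, x.coeff w * (d b w i).coeff v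
      = if w = v then (if v.toWord.getLast? = some (i, !b) then -(x.coeff v) else 0) else 0 := by
    intro w hw
    rw [d_coeff_high b i (le_trans (hx w hw) hv)]
    by_cases hwv : w = v
    · rw [hwv]
      by_cases hc : v.toWord.getLast? = some (i, !b) <;> simp [hc]
    · simp [hwv]
  rw [Finset.sum_congr rfl hterm, Finset.sum_ite_eq' (suppF x) v]
  by_cases hvs : v ∈ suppF x
  · rw [if_pos hvs]
  · rw [if_neg hvs]
    have hz : x.coeff v = 0 := by
      by_contra hne
      exact hvs (mem_suppF_iff.mpr hne)
    simp [hz]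

lemma pd_supp_le (b : Bool) (i : Fin n) {x : Lam k n} {L : ℕ}
    (hx : ∀ w ∈ suppF x, w.norm ≤ L) :
    ∀ v ∈ suppF (pd b i x), v.norm ≤ L := by
  intro v hv
  by_contra hgt
  push_neg at hgt
  have hz : x.coeff v = 0 := by
    by_contra hne
    exact absurd (hx v (mem_suppF_iff.mpr hne)) (not_le.mpr hgt)
  have := pd_coeff_high b i hx (le_of_lt hgt)
  rw [hz, neg_zero, ite_self] at this
  exact mem_suppF_iff.mp hv this

/-- the augmentation ideal, as a submodule -/
noncomputable abbrev Iaug (k : Type*) [CommRing k] (n : ℕ) : Submodule k (Lam k n) :=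
  LinearMap.ker (freeGroupAug k n).toLinearMap

lemma mem_Iaug_iff {x : Lam k n} : x ∈ Iaug k n ↔ freeGroupAug k n x = 0 :=
  LinearMap.mem_ker

lemma Iaug_mul_top : Iaug k n * ⊤ ≤ Iaug k n := by
  rw [Submodule.mul_le]
  intro x hx y _
  rw [mem_Iaug_iff] at hx ⊢
  rw [map_mul, hx, zero_mul]

lemma Ipow_mul_top (m : ℕ) : Iaug k n ^ (m + 1) * ⊤ ≤ Iaug k n ^ (m + 1) := by
  induction m with
  | zero => rw [pow_one]; exact Iaug_mul_top
  | succ m ih =>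
      calc Iaug k n ^ (m + 2) * ⊤ = Iaug k n ^ (m + 1) * (Iaug k n * ⊤) := by
            rw [pow_succ, mul_assoc]
        _ ≤ Iaug k n ^ (m + 1) * Iaug k n := mul_le_mul_right Iaug_mul_top _
        _ = Iaug k n ^ (m + 2) := (pow_succ _ _).symm

lemma pd_mem_pow (b : Bool) (i : Fin n) (m : ℕ) {x : Lam k n}
    (hx : x ∈ Iaug k n ^ (m + 2)) : pd b i x ∈ Iaug k n ^ (m + 1) := by
  have hle : Iaug k n ^ (m + 2) ≤ Submodule.comap (pd b i) (Iaug k n ^ (m + 1)) := by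
    rw [show m + 2 = (m + 1) + 1 from rfl, pow_succ, Submodule.mul_le]
    intro f hf g hg
    rw [Submodule.mem_comap, pd_mul, mem_Iaug_iff.mp hg, zero_smul, zero_add]
    exact Ipow_mul_top m (Submodule.mul_mem_mul hf Submodule.mem_top)
  exact hle hx

/-- The intersection of the powers of the augmentation ideal. -/
noncomputable def Kinf (k : Type*) [CommRing k] (n : ℕ) : Submodule k (Lam k n) :=
  ⨅ m : ℕ, Iaug k n ^ (m + 1)

lemma mem_Kinf {x : Lam k n} : x ∈ Kinf k n ↔ ∀ m : ℕ, x ∈ Iaug k n ^ (m + 1) :=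
  Submodule.mem_iInf _

lemma pd_mem_Kinf (b : Bool) (i : Fin n) {x : Lam k n} (hx : x ∈ Kinf k n) :
    pd b i x ∈ Kinf k n := by
  rw [mem_Kinf] at hx ⊢
  intro m
  exact pd_mem_pow b i m (hx (m + 1))

lemma aug_Kinf {x : Lam k n} (hx : x ∈ Kinf k n) : freeGroupAug k n x = 0 := by
  have h0 := mem_Kinf.mp hx 0
  rw [pow_one] at h0
  exact mem_Iaug_iff.mp h0

lemma eq_zero_of_pd_zero (b : Bool) {x : Lam k n} (hx : x ∈ Kinf k n)
    (hz : ∀ m : Fin n, pd b m x = 0) : x = 0 := by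
  have h := recon b x
  rw [aug_Kinf hx, zero_smul, zero_add] at h
  simpa [hz] using h

lemma kinf_eq_zero (L : ℕ) :
    ∀ x : Lam k n, x ∈ Kinf k n → (∀ w ∈ suppF x, w.norm < L) → x = 0 := by
  induction L with
  | zero =>
      intro x _ h
      exact MonoidAlgebra.coeff_eq_zero.mp <| Finsupp.support_eq_empty.mp
        (Finset.eq_empty_of_forall_notMem fun w hw => Nat.not_lt_zero _ (h w hw))
  | succ L IHL =>
      suffices Hin : ∀ (t : ℕ) (x : Lam k n), x ∈ Kinf k n →
          (∀ w ∈ suppF x, w.norm ≤ L) →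
          ((suppF x).filter (fun w => w.norm = L)).card ≤ t → x = 0 by
        intro x hx h
        exact Hin _ x hx (fun w hw => Nat.lt_succ_iff.mp (h w hw)) le_rfl
      intro t
      induction t with
      | zero =>
          intro x hx h hc
          apply IHL x hx
          intro w hw
          rcases Nat.lt_or_ge w.norm L with h1 | h1
          · exact h1
          · exfalso
            have he : w.norm = L := le_antisymm (h w hw) h1
            have hmem : w ∈ (suppF x).filter (fun w => w.norm = L) :=
              Finset.mem_filter.mpr ⟨hw, he⟩
            have := Finset.card_pos.mpr ⟨w, hmem⟩
            omega
      | succ t IHt =>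
          intro x hx h hc
          have step : ∀ b : Bool, (∀ m : Fin n,
              ((suppF (pd b m x)).filter (fun w => w.norm = L)).card ≤ t) → x = 0 := by
            intro b hsmall
            refine eq_zero_of_pd_zero b hx fun m => ?_
            exact IHt (pd b m x) (pd_mem_Kinf b m hx) (pd_supp_le b m h) (hsmall m)
          by_cases hcom : ∃ c : Fin n × Bool, ∀ w ∈ (suppF x).filter (fun w => w.norm = L),
              w.toWord.getLast? = some c
          · obtain ⟨⟨i0, b0⟩, hcomm⟩ := hcom
            refine step b0 fun m => ?_
            have hempty : (suppF (pd b0 m x)).filter (fun w => w.norm = L) = ∅ := by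
              refine Finset.eq_empty_of_forall_notMem fun v hv => ?_
              obtain ⟨hvs, hvn⟩ := Finset.mem_filter.mp hv
              have hco := pd_coeff_high b0 m h hvn.ge
              have hne := mem_suppF_iff.mp hvs
              rw [hco] at hne
              by_cases hcnd : v.toWord.getLast? = some (m, !b0)
              · rw [if_pos hcnd] at hne
                have hxv : x.coeff v ≠ 0 := fun hh => hne (by rw [hh, neg_zero])
                have hvT : v ∈ (suppF x).filter (fun w => w.norm = L) :=
                  Finset.mem_filter.mpr ⟨mem_suppF_iff.mpr hxv, hvn⟩
                have heq := hcomm v hvT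
                rw [hcnd] at heq
                injection heq with hh
                have hb := congrArg Prod.snd hh
                simp at hb
              · rw [if_neg hcnd] at hne
                exact hne rfl
            rw [hempty]
            simp
          · push_neg at hcom
            refine step true fun m => ?_
            obtain ⟨w0, hw0T, hw0ne⟩ := hcom (m, !true)
            have hsub : (suppF (pd true m x)).filter (fun w => w.norm = L)
                ⊆ ((suppF x).filter (fun w => w.norm = L)).erase w0 := by
              intro v hv
              obtain ⟨hvs, hvn⟩ := Finset.mem_filter.mp hv
              have hco := pd_coeff_high true m h hvn.ge
              have hne := mem_suppF_iff.mp hvs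
              rw [hco] at hne
              by_cases hcnd : v.toWord.getLast? = some (m, !true)
              · rw [if_pos hcnd] at hne
                have hxv : x.coeff v ≠ 0 := fun hh => hne (by rw [hh, neg_zero])
                refine Finset.mem_erase.mpr
                  ⟨?_, Finset.mem_filter.mpr ⟨mem_suppF_iff.mpr hxv, hvn⟩⟩
                rintro rfl
                exact hw0ne hcnd
              · rw [if_neg hcnd] at hne
                exact absurd rfl hne
            have hcard := Finset.card_le_card hsub
            have hErase := Finset.card_erase_of_mem hw0T
            omega

end FoxAux

theorem stmt0 (k : Type*) [CommRing k] (n : ℕ) (hn : 1 ≤ n) :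
    ⨅ m : ℕ, (LinearMap.ker (freeGroupAug k n).toLinearMap) ^ (m + 1)
      = (⊥ : Submodule k (MonoidAlgebra k (FreeGroup (Fin n)))) := by
  rw [eq_bot_iff]
  intro x hx
  rw [Submodule.mem_bot]
  refine FoxAux.kinf_eq_zero ((FoxAux.suppF x).sup FreeGroup.norm + 1) x hx ?_
  intro w hw
  exact Nat.lt_succ_of_le (Finset.le_sup hw)
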